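/- Let p be an odd prime. Then for any integer x, the sum over k from 0 to p-1 of C(2k,k)^2 * C(4k,2k) * (x*(1-64x))^k is congruent modulo p^2 to the square of the sum over k from 0 to p-1 of C(2k,k) * C(4k,2k) * x^k. -/

import Mathlib

open Finset

namespace S4

/-- `B k = C(2k,k) * C(4k,2k)` as a rational. -/
def Bq (k : ℕ) : ℚ := (Nat.choose (2*k) k : ℚ) * (Nat.choose (4*k) (2*k) : ℚ)
/-- `C k = C(2k,k)^2 * C(4k,2k)` as a rational. -/
def Cq (k : ℕ) : ℚ := (Nat.choose (2*k) k : ℚ)^2 * (Nat.choose (4*k) (2*k) : ℚ)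

lemma chq (m e : ℕ) :
    ((e:ℚ)+1) * (Nat.choose m (e+1) : ℚ) = ((m:ℚ) - e) * (Nat.choose m e : ℚ) := by
  rcases lt_trichotomy m e with h | h | h
  · rw [Nat.choose_eq_zero_of_lt (by omega), Nat.choose_eq_zero_of_lt (by omega)]
    ring
  · subst h
    rw [Nat.choose_eq_zero_of_lt (by omega)]
    ring
  · have := Nat.choose_succ_right_eq m e
    have h2 : ((Nat.choose m (e+1) * (e+1) : ℕ) : ℚ) = ((Nat.choose m e * (m - e) : ℕ) : ℚ) := by
      exact_mod_cast congrArg (Nat.cast (R := ℚ)) this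
    push_cast [Nat.cast_sub h.le] at h2
    linarith [h2]

lemma chq2 (m e : ℕ) :
    ((m:ℚ) + 1 - e) * (Nat.choose (m+1) e : ℚ) = ((m:ℚ)+1) * (Nat.choose m e : ℚ) := by
  have h1 := chq (m+1) e
  have h2 : ((m:ℚ)+1) * (Nat.choose m e : ℚ) = (Nat.choose (m+1) (e+1) : ℚ) * ((e:ℚ)+1) := by
    exact_mod_cast congrArg (Nat.cast (R := ℚ)) (Nat.add_one_mul_choose_eq m e)
  push_cast at h1 h2 ⊢
  linear_combination -h1 - h2

end S4

namespace S4b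
open S4

lemma smc (n k : ℕ) : ((n:ℚ)+1) * (Nat.choose n k : ℚ) = (Nat.choose (n+1) (k+1) : ℚ) * ((k:ℚ)+1) := by
  exact_mod_cast congrArg (Nat.cast (R := ℚ)) (Nat.add_one_mul_choose_eq n k)

lemma hA2 (m : ℕ) : (Nat.choose (2*m+2) (m+1) : ℚ) * ((m:ℚ)+1)^2
    = (2*(m:ℚ)+2)*(2*(m:ℚ)+1)*(Nat.choose (2*m) m : ℚ) := by
  have ha := smc (2*m+1) m
  have hb := smc (2*m) m
  have hsym : Nat.choose (2*m+1) (m+1) = Nat.choose (2*m+1) m := by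
    rw [← Nat.choose_symm (by omega)]
    congr 1
    omega
  rw [hsym] at hb
  simp only [show 2*m+1+1 = 2*m+2 by omega] at ha
  push_cast at ha hb ⊢
  linear_combination (-(m:ℚ)-1) * ha + (-2*(m:ℚ)-2) * hb

lemma hD4 (m : ℕ) : (Nat.choose (4*m+4) (2*m+2) : ℚ) * ((2*(m:ℚ)+2)^2*(2*(m:ℚ)+1)^2)
    = (4*(m:ℚ)+4)*(4*(m:ℚ)+3)*(4*(m:ℚ)+2)*(4*(m:ℚ)+1)*(Nat.choose (4*m) (2*m) : ℚ) := by
  have hc := smc (4*m+3) (2*m+1)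
  have hd := smc (4*m+2) (2*m+1)
  have he := smc (4*m+1) (2*m)
  have hf := smc (4*m) (2*m)
  have hs1 : Nat.choose (4*m+3) (2*m+2) = Nat.choose (4*m+3) (2*m+1) := by
    rw [← Nat.choose_symm (show 2*m+1 ≤ 4*m+3 by omega)]
    congr 1
    omega
  have hs2 : Nat.choose (4*m+1) (2*m+1) = Nat.choose (4*m+1) (2*m) := by
    rw [← Nat.choose_symm (show 2*m ≤ 4*m+1 by omega)]
    congr 1
    omega
  rw [hs1] at hd
  rw [hs2] at hf
  simp only [show 4*m+3+1 = 4*m+4 by omega, show 2*m+1+1 = 2*m+2 by omega,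
    show 4*m+1+1 = 4*m+2 by omega] at hc hd he hf
  have q1 : ((2*(m:ℚ)+2)^2) * (Nat.choose (4*m+4) (2*m+2) : ℚ)
      = (4*(m:ℚ)+4)*(4*(m:ℚ)+3)*(Nat.choose (4*m+2) (2*m+1) : ℚ) := by
    push_cast at hc hd ⊢
    linear_combination (-2*(m:ℚ)-2) * hc + (-4*(m:ℚ)-4) * hd
  have q2 : ((2*(m:ℚ)+1)^2) * (Nat.choose (4*m+2) (2*m+1) : ℚ)
      = (4*(m:ℚ)+2)*(4*(m:ℚ)+1)*(Nat.choose (4*m) (2*m) : ℚ) := by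
    push_cast at he hf ⊢
    linear_combination (-2*(m:ℚ)-1) * he + (-4*(m:ℚ)-2) * hf
  linear_combination ((2*(m:ℚ)+1)^2) * q1 + ((4*(m:ℚ)+4)*(4*(m:ℚ)+3)) * q2

lemma bstep (m : ℕ) : ((m:ℚ)+1)^2 * Bq (m+1) = 4*(4*(m:ℚ)+1)*(4*(m:ℚ)+3) * Bq m := by
  have h1 := hA2 m
  have h2 := hD4 m
  have hnz : ((2*(m:ℚ)+2)^2*(2*(m:ℚ)+1)^2) ≠ 0 := by positivity
  apply mul_left_cancel₀ hnz
  unfold Bq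
  rw [show 2*(m+1) = 2*m+2 by ring, show 4*(m+1) = 4*m+4 by ring]
  linear_combination ((2*(m:ℚ)+2)^2*(2*(m:ℚ)+1)^2*(Nat.choose (4*m+4) (2*m+2) : ℚ)) * h1
    + ((2*(m:ℚ)+2)*(2*(m:ℚ)+1)*(Nat.choose (2*m) m : ℚ)) * h2

lemma CB (k : ℕ) : Cq k = (Nat.choose (2*k) k : ℚ) * Bq k := by
  unfold Cq Bq
  ring

lemma sb0 (m : ℕ) : (Nat.choose (2*m+2) (m+1) : ℚ) * ((m:ℚ)+1)
    = 2*(2*(m:ℚ)+1)*(Nat.choose (2*m) m : ℚ) := by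
  have hnz : ((m:ℚ)+1) ≠ 0 := by positivity
  apply mul_left_cancel₀ hnz
  linear_combination hA2 m

lemma cstep (m : ℕ) : ((m:ℚ)+1)^3 * Cq (m+1)
    = 8*(2*(m:ℚ)+1)*(4*(m:ℚ)+1)*(4*(m:ℚ)+3) * Cq m := by
  have hb := bstep m
  have s0 := sb0 m
  rw [CB m, CB (m+1), show 2*(m+1) = 2*m+2 by ring]
  linear_combination (((m:ℚ)+1)*(Nat.choose (2*m+2) (m+1) : ℚ)) * hb
    + (4*(4*(m:ℚ)+1)*(4*(m:ℚ)+3)*Bq m) * s0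

end S4b

namespace S4c
open S4 S4b Finset

def Rq (n : ℕ) : ℚ := ∑ i ∈ range (n+1), Bq i * Bq (n-i)
def Lq (n : ℕ) : ℚ := ∑ k ∈ range (n+1), Cq k * (Nat.choose k (n-k) : ℚ) * (-64:ℚ)^(n-k)

lemma bdiv (m : ℕ) : Bq (m+1) = 4*(4*(m:ℚ)+1)*(4*(m:ℚ)+3) * Bq m / ((m:ℚ)+1)^2 := by
  rw [eq_div_iff (by positivity)]
  linear_combination bstep m

lemma cdiv (m : ℕ) : Cq (m+1) = 8*(2*(m:ℚ)+1)*(4*(m:ℚ)+1)*(4*(m:ℚ)+3) * Cq m / ((m:ℚ)+1)^3 := by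
  rw [eq_div_iff (by positivity)]
  linear_combination cstep m

lemma Bq0 : Bq 0 = 1 := by simp [Bq]
lemma Bq1 : Bq 1 = 12 := by
  have h : Nat.choose 4 2 = 6 := rfl
  have h2 : Nat.choose 2 1 = 2 := rfl
  simp only [Bq, show 2*1=2 from rfl, show 4*1=4 from rfl, h, h2]
  norm_num

/-- telescoping step for the R-side -/
lemma Rstep (i e : ℕ) :
    ((i:ℚ)+(e:ℚ)+3)^3 * (Bq (i+1) * Bq (e+2))
      - (8*(2*((i:ℚ)+(e:ℚ)+3)-1)*(8*((i:ℚ)+(e:ℚ)+3)^2-8*((i:ℚ)+(e:ℚ)+3)+3)) * (Bq (i+1) * Bq (e+1))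
      + (1024*(((i:ℚ)+(e:ℚ)+3)-1)*(2*((i:ℚ)+(e:ℚ)+3)-1)*(2*((i:ℚ)+(e:ℚ)+3)-3)) * (Bq (i+1) * Bq e)
    = (4*(4*((i:ℚ)+1)+1)*(4*((i:ℚ)+1)+3)*((2*((i:ℚ)+1)+2-3*((i:ℚ)+(e:ℚ)+3))*(Bq (i+1)*Bq (e+1))
        + 64*(3*((i:ℚ)+(e:ℚ)+3)-2*((i:ℚ)+1)-4)*(Bq (i+1)*Bq e)))
      - (4*(4*(i:ℚ)+1)*(4*(i:ℚ)+3)*((2*(i:ℚ)+2-3*((i:ℚ)+(e:ℚ)+3))*(Bq i*Bq (e+2))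
        + 64*(3*((i:ℚ)+(e:ℚ)+3)-2*(i:ℚ)-4)*(Bq i*Bq (e+1)))) := by
  have h1 : Bq (e+2) = 4*(4*((e:ℚ)+1)+1)*(4*((e:ℚ)+1)+3) * Bq (e+1) / (((e:ℚ)+1)+1)^2 := by
    have := bdiv (e+1)
    push_cast at this ⊢
    convert this using 2 <;> push_cast <;> ring
  rw [h1, bdiv e, bdiv i]
  have hne1 : ((e:ℚ)+1) ≠ 0 := by positivity
  have hne2 : ((e:ℚ)+2) ≠ 0 := by positivity
  have hne3 : ((i:ℚ)+1) ≠ 0 := by positivity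
  field_simp
  ring

/-- boundary identity `S_R 0 = KR 0` -/
lemma Rzero (N : ℕ) :
    (((N:ℚ)+2))^3 * (Bq 0 * Bq (N+2))
      - (8*(2*((N:ℚ)+2)-1)*(8*((N:ℚ)+2)^2-8*((N:ℚ)+2)+3)) * (Bq 0 * Bq (N+1))
      + (1024*(((N:ℚ)+2)-1)*(2*((N:ℚ)+2)-1)*(2*((N:ℚ)+2)-3)) * (Bq 0 * Bq N)
    = 4*1*3*((2*(0:ℚ)+2-3*((N:ℚ)+2))*(Bq 0*Bq (N+1)) + 64*(3*((N:ℚ)+2)-2*(0:ℚ)-4)*(Bq 0*Bq N)) := by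
  have h1 : Bq (N+2) = 4*(4*((N:ℚ)+1)+1)*(4*((N:ℚ)+1)+3) * Bq (N+1) / (((N:ℚ)+1)+1)^2 := by
    have := bdiv (N+1)
    push_cast at this ⊢
    convert this using 2 <;> push_cast <;> ring
  rw [h1, bdiv N, Bq0]
  have hne1 : ((N:ℚ)+1) ≠ 0 := by positivity
  have hne2 : ((N:ℚ)+2) ≠ 0 := by positivity
  field_simp
  ring

/-- final boundary identity for the R-side -/
lemma Rfinal (N : ℕ) :
    4*(4*(N:ℚ)+1)*(4*(N:ℚ)+3)*((2*(N:ℚ)+2-3*((N:ℚ)+2))*(Bq N*Bq 1)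
        + 64*(3*((N:ℚ)+2)-2*(N:ℚ)-4)*(Bq N*Bq 0))
      + ((N:ℚ)+2)^3 * (Bq (N+1) * Bq 1 + Bq (N+2) * Bq 0)
      - (8*(2*((N:ℚ)+2)-1)*(8*((N:ℚ)+2)^2-8*((N:ℚ)+2)+3)) * (Bq (N+1) * Bq 0) = 0 := by
  have h1 : Bq (N+2) = 4*(4*((N:ℚ)+1)+1)*(4*((N:ℚ)+1)+3) * Bq (N+1) / (((N:ℚ)+1)+1)^2 := by
    have := bdiv (N+1)
    push_cast at this ⊢
    convert this using 2 <;> push_cast <;> ring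
  rw [h1, bdiv N, Bq0, Bq1]
  have hne1 : ((N:ℚ)+1) ≠ 0 := by positivity
  have hne2 : ((N:ℚ)+2) ≠ 0 := by positivity
  field_simp
  ring

end S4c

namespace S4d
open S4 S4b S4c Finset

def KRf (N j : ℕ) : ℚ :=
  4*(4*(j:ℚ)+1)*(4*(j:ℚ)+3)*((2*(j:ℚ)+2-3*((N:ℚ)+2))*(Bq j*Bq (N+1-j))
    + 64*(3*((N:ℚ)+2)-2*(j:ℚ)-4)*(Bq j*Bq (N-j)))

lemma Rrec (N : ℕ) :
    ((N:ℚ)+2)^3 * Rq (N+2)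
      = (8*(2*((N:ℚ)+2)-1)*(8*((N:ℚ)+2)^2-8*((N:ℚ)+2)+3)) * Rq (N+1)
        - (1024*(((N:ℚ)+2)-1)*(2*((N:ℚ)+2)-1)*(2*((N:ℚ)+2)-3)) * Rq N := by
  have hR2 : Rq (N+2) = (∑ i ∈ range (N+1), Bq i * Bq (N+2-i)) + (Bq (N+1) * Bq 1 + Bq (N+2) * Bq 0) := by
    unfold Rq
    rw [sum_range_succ, sum_range_succ]
    rw [show N+2-(N+1) = 1 by omega, show N+2-(N+2) = 0 by omega]
    ring
  have hR1 : Rq (N+1) = (∑ i ∈ range (N+1), Bq i * Bq (N+1-i)) + Bq (N+1) * Bq 0 := by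
    unfold Rq
    rw [sum_range_succ, show N+1-(N+1) = 0 by omega]
  have hR0 : Rq N = ∑ i ∈ range (N+1), Bq i * Bq (N-i) := rfl
  have key : ∑ i ∈ range (N+1),
      (((N:ℚ)+2)^3 * (Bq i * Bq (N+2-i))
        - (8*(2*((N:ℚ)+2)-1)*(8*((N:ℚ)+2)^2-8*((N:ℚ)+2)+3)) * (Bq i * Bq (N+1-i))
        + (1024*(((N:ℚ)+2)-1)*(2*((N:ℚ)+2)-1)*(2*((N:ℚ)+2)-3)) * (Bq i * Bq (N-i))) = KRf N N := by
    rw [Finset.sum_range_succ']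
    have h0 : ((N:ℚ)+2)^3 * (Bq 0 * Bq (N+2-0))
        - (8*(2*((N:ℚ)+2)-1)*(8*((N:ℚ)+2)^2-8*((N:ℚ)+2)+3)) * (Bq 0 * Bq (N+1-0))
        + (1024*(((N:ℚ)+2)-1)*(2*((N:ℚ)+2)-1)*(2*((N:ℚ)+2)-3)) * (Bq 0 * Bq (N-0)) = KRf N 0 := by
      simp only [Nat.sub_zero, KRf, Nat.cast_zero]
      linear_combination Rzero N
    have hs : ∀ i ∈ range N,
        (((N:ℚ)+2)^3 * (Bq (i+1) * Bq (N+2-(i+1)))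
          - (8*(2*((N:ℚ)+2)-1)*(8*((N:ℚ)+2)^2-8*((N:ℚ)+2)+3)) * (Bq (i+1) * Bq (N+1-(i+1)))
          + (1024*(((N:ℚ)+2)-1)*(2*((N:ℚ)+2)-1)*(2*((N:ℚ)+2)-3)) * (Bq (i+1) * Bq (N-(i+1))))
          = KRf N (i+1) - KRf N i := by
      intro i hi
      have hiN : i < N := mem_range.mp hi
      obtain ⟨e, he⟩ : ∃ e, N = i + e + 1 := ⟨N - i - 1, by omega⟩
      subst he
      simp only [KRf]
      rw [show i+e+1+2-(i+1) = e+2 by omega, show i+e+1+1-(i+1) = e+1 by omega,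
        show i+e+1-(i+1) = e by omega, show i+e+1+1-i = e+2 by omega, show i+e+1-i = e+1 by omega]
      push_cast
      linear_combination Rstep i e
    rw [Finset.sum_congr rfl hs, Finset.sum_range_sub (KRf N), h0]
    ring
  have hKRN : KRf N N = 4*(4*(N:ℚ)+1)*(4*(N:ℚ)+3)*((2*(N:ℚ)+2-3*((N:ℚ)+2))*(Bq N*Bq 1)
      + 64*(3*((N:ℚ)+2)-2*(N:ℚ)-4)*(Bq N*Bq 0)) := by
    simp only [KRf]
    rw [show N+1-N = 1 by omega, show N-N = 0 by omega]
  rw [hKRN] at key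
  rw [hR2, hR1, hR0]
  have expand : ∑ i ∈ range (N+1),
      (((N:ℚ)+2)^3 * (Bq i * Bq (N+2-i))
        - (8*(2*((N:ℚ)+2)-1)*(8*((N:ℚ)+2)^2-8*((N:ℚ)+2)+3)) * (Bq i * Bq (N+1-i))
        + (1024*(((N:ℚ)+2)-1)*(2*((N:ℚ)+2)-1)*(2*((N:ℚ)+2)-3)) * (Bq i * Bq (N-i)))
      = ((N:ℚ)+2)^3 * (∑ i ∈ range (N+1), Bq i * Bq (N+2-i))
        - (8*(2*((N:ℚ)+2)-1)*(8*((N:ℚ)+2)^2-8*((N:ℚ)+2)+3)) * (∑ i ∈ range (N+1), Bq i * Bq (N+1-i))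
        + (1024*(((N:ℚ)+2)-1)*(2*((N:ℚ)+2)-1)*(2*((N:ℚ)+2)-3)) * (∑ i ∈ range (N+1), Bq i * Bq (N-i)) := by
    simp only [Finset.sum_add_distrib, Finset.sum_sub_distrib, ← Finset.mul_sum]
  rw [expand] at key
  linear_combination key + Rfinal N
end S4d

namespace S4e
open S4 S4b S4c Finset

def KLf (N k : ℕ) : ℚ :=
  (2*(k:ℚ)+1)*(4*(k:ℚ)+1)*(4*(k:ℚ)+3)*(-8 * (Cq k * (Nat.choose k (N+1-k) : ℚ) * (-64:ℚ)^(N+1-k))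
    + 1024 * (Cq k * (Nat.choose k (N-k) : ℚ) * (-64:ℚ)^(N-k)))

lemma hu1 (k e : ℕ) : (Nat.choose k (e+1) : ℚ) = ((k:ℚ)-e) * (Nat.choose k e : ℚ) / ((e:ℚ)+1) := by
  rw [eq_div_iff (by positivity)]
  linear_combination chq k e

lemma hv1 (k e : ℕ) : (Nat.choose (k+1) (e+1) : ℚ) = (Nat.choose k e : ℚ) + (Nat.choose k (e+1) : ℚ) := by
  exact_mod_cast congrArg (Nat.cast (R := ℚ)) (Nat.choose_succ_succ k e)

lemma Lstep (k e : ℕ) :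
    ((k:ℚ)+(e:ℚ)+3)^3 * (Cq (k+1) * (Nat.choose (k+1) (e+2) : ℚ) * (-64:ℚ)^(e+2))
      - (8*(2*((k:ℚ)+(e:ℚ)+3)-1)*(8*((k:ℚ)+(e:ℚ)+3)^2-8*((k:ℚ)+(e:ℚ)+3)+3))
          * (Cq (k+1) * (Nat.choose (k+1) (e+1) : ℚ) * (-64:ℚ)^(e+1))
      + (1024*(((k:ℚ)+(e:ℚ)+3)-1)*(2*((k:ℚ)+(e:ℚ)+3)-1)*(2*((k:ℚ)+(e:ℚ)+3)-3))
          * (Cq (k+1) * (Nat.choose (k+1) e : ℚ) * (-64:ℚ)^e)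
    = ((2*((k:ℚ)+1)+1)*(4*((k:ℚ)+1)+1)*(4*((k:ℚ)+1)+3)
        *(-8 * (Cq (k+1) * (Nat.choose (k+1) (e+1) : ℚ) * (-64:ℚ)^(e+1))
          + 1024 * (Cq (k+1) * (Nat.choose (k+1) e : ℚ) * (-64:ℚ)^e)))
      - ((2*(k:ℚ)+1)*(4*(k:ℚ)+1)*(4*(k:ℚ)+3)
        *(-8 * (Cq k * (Nat.choose k (e+2) : ℚ) * (-64:ℚ)^(e+2))
          + 1024 * (Cq k * (Nat.choose k (e+1) : ℚ) * (-64:ℚ)^(e+1)))) := by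
  have hu2 : (Nat.choose k (e+2) : ℚ) = ((k:ℚ)-e-1) * (Nat.choose k (e+1) : ℚ) / ((e:ℚ)+2) := by
    have := hu1 k (e+1)
    push_cast at this ⊢
    rw [this]
    ring
  have hv2 : (Nat.choose (k+1) (e+2) : ℚ) = (Nat.choose k (e+1) : ℚ) + (Nat.choose k (e+2) : ℚ) :=
    hv1 k (e+1)
  rw [pow_succ (-64:ℚ) (e+1), pow_succ (-64:ℚ) e]
  by_cases hek : e = k+1
  · subst hek
    rw [Nat.choose_self, Nat.choose_eq_zero_of_lt (show k+1 < k+1+2 by omega),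
      Nat.choose_eq_zero_of_lt (show k+1 < k+1+1 by omega),
      Nat.choose_eq_zero_of_lt (show k < k+1+2 by omega),
      Nat.choose_eq_zero_of_lt (show k < k+1+1 by omega)]
    push_cast
    ring
  · have hne : ((k:ℚ)+1-(e:ℚ)) ≠ 0 := by
      have h1 : ((k:ℚ)+1) ≠ (e:ℚ) := by
        intro h
        have h2 : ((k+1:ℕ):ℚ) = ((e:ℕ):ℚ) := by push_cast; linarith
        have h3 : (k+1:ℕ) = e := Nat.cast_injective h2
        exact hek h3.symm
      exact sub_ne_zero.mpr h1
    have hv0 : (Nat.choose (k+1) e : ℚ) = ((k:ℚ)+1) * (Nat.choose k e : ℚ) / ((k:ℚ)+1-(e:ℚ)) := by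
      rw [eq_div_iff hne]
      linear_combination chq2 k e
    rw [cdiv k, hv2, hv1, hv0, hu2, hu1 k e]
    field_simp
    ring

end S4e

namespace S4f
open S4 S4b S4c S4e Finset

lemma Cq0 : Cq 0 = 1 := by simp [Cq]

lemma Lzero (N : ℕ) :
    ((N:ℚ)+2)^3 * (Cq 0 * (Nat.choose 0 (N+2-0) : ℚ) * (-64:ℚ)^(N+2-0))
      - (8*(2*((N:ℚ)+2)-1)*(8*((N:ℚ)+2)^2-8*((N:ℚ)+2)+3))
          * (Cq 0 * (Nat.choose 0 (N+1-0) : ℚ) * (-64:ℚ)^(N+1-0))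
      + (1024*(((N:ℚ)+2)-1)*(2*((N:ℚ)+2)-1)*(2*((N:ℚ)+2)-3))
          * (Cq 0 * (Nat.choose 0 (N-0) : ℚ) * (-64:ℚ)^(N-0)) = KLf N 0 := by
  simp only [Nat.sub_zero, KLf, Nat.cast_zero, Cq0]
  rcases N with _ | M
  · norm_num
  · rw [Nat.choose_zero_succ, Nat.choose_zero_succ, Nat.choose_zero_succ]
    push_cast
    ring

lemma Lfinal (N : ℕ) :
    KLf N N + ((N:ℚ)+2)^3 * (Cq (N+1) * (Nat.choose (N+1) 1 : ℚ) * (-64:ℚ)^1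
        + Cq (N+2) * (Nat.choose (N+2) 0 : ℚ) * (-64:ℚ)^0)
      - (8*(2*((N:ℚ)+2)-1)*(8*((N:ℚ)+2)^2-8*((N:ℚ)+2)+3))
          * (Cq (N+1) * (Nat.choose (N+1) 0 : ℚ) * (-64:ℚ)^0) = 0 := by
  simp only [KLf, Nat.choose_zero_right, Nat.choose_one_right,
    show N+1-N = 1 by omega, show N-N = 0 by omega]
  have h2 : Cq (N+2) = 8*(2*((N:ℚ)+1)+1)*(4*((N:ℚ)+1)+1)*(4*((N:ℚ)+1)+3) * Cq (N+1) / (((N:ℚ)+1)+1)^3 := by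
    have := cdiv (N+1)
    push_cast at this ⊢
    rw [this]
  rw [h2, cdiv N]
  push_cast
  have hne1 : ((N:ℚ)+1) ≠ 0 := by positivity
  have hne2 : ((N:ℚ)+2) ≠ 0 := by positivity
  field_simp
  ring

lemma Lrec (N : ℕ) :
    ((N:ℚ)+2)^3 * Lq (N+2)
      = (8*(2*((N:ℚ)+2)-1)*(8*((N:ℚ)+2)^2-8*((N:ℚ)+2)+3)) * Lq (N+1)
        - (1024*(((N:ℚ)+2)-1)*(2*((N:ℚ)+2)-1)*(2*((N:ℚ)+2)-3)) * Lq N := by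
  have hL2 : Lq (N+2) = (∑ k ∈ range (N+1), Cq k * (Nat.choose k (N+2-k) : ℚ) * (-64:ℚ)^(N+2-k))
      + (Cq (N+1) * (Nat.choose (N+1) 1 : ℚ) * (-64:ℚ)^1
        + Cq (N+2) * (Nat.choose (N+2) 0 : ℚ) * (-64:ℚ)^0) := by
    unfold Lq
    rw [sum_range_succ, sum_range_succ]
    rw [show N+2-(N+1) = 1 by omega, show N+2-(N+2) = 0 by omega]
    ring
  have hL1 : Lq (N+1) = (∑ k ∈ range (N+1), Cq k * (Nat.choose k (N+1-k) : ℚ) * (-64:ℚ)^(N+1-k))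
      + Cq (N+1) * (Nat.choose (N+1) 0 : ℚ) * (-64:ℚ)^0 := by
    unfold Lq
    rw [sum_range_succ, show N+1-(N+1) = 0 by omega]
  have hL0 : Lq N = ∑ k ∈ range (N+1), Cq k * (Nat.choose k (N-k) : ℚ) * (-64:ℚ)^(N-k) := rfl
  have key : ∑ k ∈ range (N+1),
      (((N:ℚ)+2)^3 * (Cq k * (Nat.choose k (N+2-k) : ℚ) * (-64:ℚ)^(N+2-k))
        - (8*(2*((N:ℚ)+2)-1)*(8*((N:ℚ)+2)^2-8*((N:ℚ)+2)+3))
            * (Cq k * (Nat.choose k (N+1-k) : ℚ) * (-64:ℚ)^(N+1-k))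
        + (1024*(((N:ℚ)+2)-1)*(2*((N:ℚ)+2)-1)*(2*((N:ℚ)+2)-3))
            * (Cq k * (Nat.choose k (N-k) : ℚ) * (-64:ℚ)^(N-k))) = KLf N N := by
    rw [Finset.sum_range_succ']
    have hs : ∀ k ∈ range N,
        (((N:ℚ)+2)^3 * (Cq (k+1) * (Nat.choose (k+1) (N+2-(k+1)) : ℚ) * (-64:ℚ)^(N+2-(k+1)))
          - (8*(2*((N:ℚ)+2)-1)*(8*((N:ℚ)+2)^2-8*((N:ℚ)+2)+3))
              * (Cq (k+1) * (Nat.choose (k+1) (N+1-(k+1)) : ℚ) * (-64:ℚ)^(N+1-(k+1)))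
          + (1024*(((N:ℚ)+2)-1)*(2*((N:ℚ)+2)-1)*(2*((N:ℚ)+2)-3))
              * (Cq (k+1) * (Nat.choose (k+1) (N-(k+1)) : ℚ) * (-64:ℚ)^(N-(k+1))))
          = KLf N (k+1) - KLf N k := by
      intro k hk
      have hkN : k < N := mem_range.mp hk
      obtain ⟨e, he⟩ : ∃ e, N = k + e + 1 := ⟨N - k - 1, by omega⟩
      subst he
      simp only [KLf]
      rw [show k+e+1+2-(k+1) = e+2 by omega, show k+e+1+1-(k+1) = e+1 by omega,
        show k+e+1-(k+1) = e by omega, show k+e+1+1-k = e+2 by omega, show k+e+1-k = e+1 by omega]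
      push_cast
      linear_combination Lstep k e
    rw [Finset.sum_congr rfl hs, Finset.sum_range_sub (KLf N), Lzero N]
    ring
  have expand : ∑ k ∈ range (N+1),
      (((N:ℚ)+2)^3 * (Cq k * (Nat.choose k (N+2-k) : ℚ) * (-64:ℚ)^(N+2-k))
        - (8*(2*((N:ℚ)+2)-1)*(8*((N:ℚ)+2)^2-8*((N:ℚ)+2)+3))
            * (Cq k * (Nat.choose k (N+1-k) : ℚ) * (-64:ℚ)^(N+1-k))
        + (1024*(((N:ℚ)+2)-1)*(2*((N:ℚ)+2)-1)*(2*((N:ℚ)+2)-3))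
            * (Cq k * (Nat.choose k (N-k) : ℚ) * (-64:ℚ)^(N-k)))
      = ((N:ℚ)+2)^3 * (∑ k ∈ range (N+1), Cq k * (Nat.choose k (N+2-k) : ℚ) * (-64:ℚ)^(N+2-k))
        - (8*(2*((N:ℚ)+2)-1)*(8*((N:ℚ)+2)^2-8*((N:ℚ)+2)+3))
            * (∑ k ∈ range (N+1), Cq k * (Nat.choose k (N+1-k) : ℚ) * (-64:ℚ)^(N+1-k))
        + (1024*(((N:ℚ)+2)-1)*(2*((N:ℚ)+2)-1)*(2*((N:ℚ)+2)-3))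
            * (∑ k ∈ range (N+1), Cq k * (Nat.choose k (N-k) : ℚ) * (-64:ℚ)^(N-k)) := by
    simp only [Finset.sum_add_distrib, Finset.sum_sub_distrib, ← Finset.mul_sum]
  rw [expand] at key
  rw [hL2, hL1, hL0]
  linear_combination key + Lfinal N

end S4f

namespace S4g
open S4 S4b S4c S4d S4f Finset

lemma Lq0 : Lq 0 = 1 := by
  simp [Lq, Cq]

lemma Rq0 : Rq 0 = 1 := by
  simp [Rq, Bq]

lemma Lq1 : Lq 1 = 24 := by
  unfold Lq
  rw [Finset.sum_range_succ, Finset.sum_range_succ, Finset.sum_range_zero]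
  norm_num [Cq]
  norm_num [show (2*2).choose 2 = 6 from rfl]

lemma Rq1 : Rq 1 = 24 := by
  unfold Rq
  rw [Finset.sum_range_succ, Finset.sum_range_succ, Finset.sum_range_zero]
  norm_num [Bq0, Bq1]

lemma LeqR : ∀ n, Lq n = Rq n := by
  intro n
  induction n using Nat.strong_induction_on with
  | _ n ih =>
    match n with
    | 0 => rw [Lq0, Rq0]
    | 1 => rw [Lq1, Rq1]
    | (N+2) =>
      have e1 : Lq (N+1) = Rq (N+1) := ih (N+1) (by omega)
      have e0 : Lq N = Rq N := ih N (by omega)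
      have hne : ((N:ℚ)+2)^3 ≠ 0 := by positivity
      apply mul_left_cancel₀ hne
      rw [Lrec N, Rrec N, e0, e1]

def Bz (k : ℕ) : ℤ := (Nat.choose (2*k) k : ℤ) * (Nat.choose (4*k) (2*k) : ℤ)
def Cz (k : ℕ) : ℤ := (Nat.choose (2*k) k : ℤ)^2 * (Nat.choose (4*k) (2*k) : ℤ)
def Lz (n : ℕ) : ℤ := ∑ k ∈ range (n+1), Cz k * (Nat.choose k (n-k) : ℤ) * (-64)^(n-k)
def Rz (n : ℕ) : ℤ := ∑ i ∈ range (n+1), Bz i * Bz (n-i)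

lemma LzRz (n : ℕ) : Lz n = Rz n := by
  have h := LeqR n
  have hL : ((Lz n : ℤ) : ℚ) = Lq n := by
    unfold Lz Lq Cz Cq
    push_cast
    rfl
  have hR : ((Rz n : ℤ) : ℚ) = Rq n := by
    unfold Rz Rq Bz Bq
    push_cast
    rfl
  exact_mod_cast hL.trans (h.trans hR.symm)

end S4g

namespace S4h
open S4g Finset

variable {p : ℕ}

lemma dvd_central (hp : p.Prime) {k : ℕ} (hk : k < p) (h2 : p ≤ 2*k) :
    p ∣ Nat.choose (2*k) k := by
  have h := Nat.Prime.dvd_choose_add hp hk hk (by omega)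
  rwa [show k+k = 2*k by ring] at h

lemma dvd_quarter (hp : p.Prime) {i : ℕ} (h1 : 2*i < p) (h2 : p ≤ 4*i) :
    p ∣ Nat.choose (4*i) (2*i) := by
  have h := Nat.Prime.dvd_choose_add hp h1 h1 (by omega)
  rwa [show 2*i+2*i = 4*i by ring] at h

lemma dvd_lucas (hp : p.Prime) {j : ℕ} (hj : j < p) (h3 : 3*p < 4*j) :
    p ∣ Nat.choose (4*j) (2*j) := by
  haveI : Fact p.Prime := ⟨hp⟩
  have hp0 : 0 < p := hp.pos
  have hmod := Choose.choose_modEq_choose_mod_mul_choose_div (p := p) (n := 4*j) (k := 2*j)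
  have e1 : (4*j) % p = 4*j - 3*p := by
    conv_lhs => rw [show 4*j = (4*j-3*p) + p*3 by omega]
    rw [Nat.add_mul_mod_self_left]
    exact Nat.mod_eq_of_lt (by omega)
  have e2 : (2*j) % p = 2*j - p := by
    conv_lhs => rw [show 2*j = (2*j-p) + p*1 by omega]
    rw [Nat.add_mul_mod_self_left]
    exact Nat.mod_eq_of_lt (by omega)
  have hz : Nat.choose ((4*j) % p) ((2*j) % p) = 0 := by
    rw [e1, e2]
    exact Nat.choose_eq_zero_of_lt (by omega)
  have h0 : ((Nat.choose (4*j) (2*j) : ℤ)) ≡ 0 [ZMOD (p:ℤ)] := by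
    simpa [hz] using hmod
  have hdvd : ((p:ℤ)) ∣ ((Nat.choose (4*j) (2*j) : ℤ)) := (Int.modEq_zero_iff_dvd).mp h0
  exact_mod_cast hdvd

lemma b_pair (hp : p.Prime) {i j : ℕ} (hi : i < p) (hj : j < p) (hij : p ≤ i + j)
    (hle : i ≤ j) : (p:ℤ)^2 ∣ Bz i * Bz j := by
  have hpj : p ≤ 2*j := by omega
  have hdj : p ∣ Nat.choose (2*j) j := dvd_central hp hj hpj
  obtain ⟨b, hb⟩ : ((p:ℤ)) ∣ ((Nat.choose (2*j) j : ℤ)) := Int.natCast_dvd_natCast.mpr hdj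
  by_cases h1 : p ≤ 2*i
  · obtain ⟨a, ha⟩ : ((p:ℤ)) ∣ ((Nat.choose (2*i) i : ℤ)) :=
      Int.natCast_dvd_natCast.mpr (dvd_central hp hi h1)
    exact ⟨a * (Nat.choose (4*i) (2*i) : ℤ) * (b * (Nat.choose (4*j) (2*j) : ℤ)),
      by simp only [Bz]; rw [ha, hb]; ring⟩
  · by_cases h2 : p ≤ 4*i
    · obtain ⟨a, ha⟩ : ((p:ℤ)) ∣ ((Nat.choose (4*i) (2*i) : ℤ)) :=
        Int.natCast_dvd_natCast.mpr (dvd_quarter hp (by omega) h2)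
      exact ⟨(Nat.choose (2*i) i : ℤ) * a * (b * (Nat.choose (4*j) (2*j) : ℤ)),
        by simp only [Bz]; rw [ha, hb]; ring⟩
    · obtain ⟨c, hc⟩ : ((p:ℤ)) ∣ ((Nat.choose (4*j) (2*j) : ℤ)) :=
        Int.natCast_dvd_natCast.mpr (dvd_lucas hp hj (by omega))
      exact ⟨Bz i * (b * c), by simp only [Bz]; rw [hb, hc]; ring⟩

lemma b_dvd (hp : p.Prime) {i j : ℕ} (hi : i < p) (hj : j < p) (hij : p ≤ i + j) :
    (p:ℤ)^2 ∣ Bz i * Bz j := by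
  rcases le_total i j with h | h
  · exact b_pair hp hi hj hij h
  · rw [mul_comm]
    exact b_pair hp hj hi (by omega) h

lemma c_dvd (hp : p.Prime) {k m : ℕ} (hk : k < p) (hm : m ≤ k) (hkm : p ≤ k + m) :
    (p:ℤ)^2 ∣ Cz k := by
  obtain ⟨a, ha⟩ : ((p:ℤ)) ∣ ((Nat.choose (2*k) k : ℤ)) :=
    Int.natCast_dvd_natCast.mpr (dvd_central hp hk (by omega))
  exact ⟨a^2 * (Nat.choose (4*k) (2*k) : ℤ), by simp only [Cz]; rw [ha]; ring⟩

/-- reindexing the triangle `{(n,k) : k ≤ n < P}` as `{(k,m) : k+m < P}` -/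
lemma tri (P : ℕ) (f : ℕ → ℕ → ℤ) :
    (∑ n ∈ range P, ∑ k ∈ range (n+1), f k (n-k))
      = ∑ q ∈ (range P ×ˢ range P).filter (fun q => q.1 + q.2 < P), f q.1 q.2 := by
  rw [Finset.sum_sigma']
  apply Finset.sum_nbij' (i := fun q => (q.2, q.1 - q.2)) (j := fun q => ⟨q.1 + q.2, q.1⟩) <;>
    intro a ha <;>
    simp only [mem_sigma, mem_range, mem_filter, mem_product] at ha ⊢
  · omega
  · omega
  · ext <;> simp <;> omega
  · simp

end S4h

namespace S4main
open S4g S4h Finset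

theorem aux (p : ℕ) (hp : p.Prime) (hodd : Odd p) (x : ℤ) :
    (∑ k ∈ Finset.range p,
      (Nat.choose (2 * k) k : ℤ) ^ 2 * Nat.choose (4 * k) (2 * k) * (x * (1 - 64 * x)) ^ k)
    ≡ (∑ k ∈ Finset.range p,
      (Nat.choose (2 * k) k : ℤ) * Nat.choose (4 * k) (2 * k) * x ^ k) ^ 2 [ZMOD (p : ℤ) ^ 2] := by
  classical
  set FL : ℕ → ℕ → ℤ := fun k m => Cz k * ((Nat.choose k m : ℤ) * (-64)^m * x^(k+m)) with hFL
  set FR : ℕ → ℕ → ℤ := fun i j => (Bz i * x^i) * (Bz j * x^j) with hFR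
  have hexp : ∀ k ∈ range p, (Nat.choose (2 * k) k : ℤ) ^ 2 * Nat.choose (4 * k) (2 * k) * (x * (1 - 64 * x)) ^ k
      = ∑ m ∈ range p, FL k m := by
    intro k hk
    have hkp : k < p := mem_range.mp hk
    have h1 : (x*(1-64*x))^k = ∑ m ∈ range (k+1), (Nat.choose k m : ℤ) * (-64)^m * x^(k+m) := by
      rw [show x*(1-64*x) = ((-64)*x+1)*x by ring, mul_pow, add_pow, Finset.sum_mul]
      apply Finset.sum_congr rfl
      intro m hm
      rw [mul_pow, one_pow, pow_add]
      ring
    have h2 : (Nat.choose (2 * k) k : ℤ) ^ 2 * Nat.choose (4 * k) (2 * k) * (x * (1 - 64 * x)) ^ k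
        = ∑ m ∈ range (k+1), FL k m := by
      rw [h1, Finset.mul_sum]
      simp only [hFL, Cz]
    rw [h2]
    apply Finset.sum_subset
    · intro m hm
      simp only [mem_range] at hm ⊢
      omega
    · intro m hm hnm
      simp only [mem_range] at hm hnm
      simp only [hFL, Nat.choose_eq_zero_of_lt (show k < m by omega)]
      push_cast
      ring
  have eA : (∑ k ∈ Finset.range p,
        (Nat.choose (2 * k) k : ℤ) ^ 2 * Nat.choose (4 * k) (2 * k) * (x * (1 - 64 * x)) ^ k)
      = ∑ q ∈ (range p ×ˢ range p).filter (fun q => q.1 + q.2 < p), FL q.1 q.2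
        + ∑ q ∈ (range p ×ˢ range p).filter (fun q => ¬ q.1 + q.2 < p), FL q.1 q.2 := by
    rw [Finset.sum_congr rfl hexp, ← Finset.sum_product',
      Finset.sum_filter_add_sum_filter_not]
  have eB : (∑ k ∈ Finset.range p,
        (Nat.choose (2 * k) k : ℤ) * Nat.choose (4 * k) (2 * k) * x ^ k) ^ 2
      = ∑ q ∈ (range p ×ˢ range p).filter (fun q => q.1 + q.2 < p), FR q.1 q.2
        + ∑ q ∈ (range p ×ˢ range p).filter (fun q => ¬ q.1 + q.2 < p), FR q.1 q.2 := by
    have : (∑ k ∈ Finset.range p, (Nat.choose (2 * k) k : ℤ) * Nat.choose (4 * k) (2 * k) * x ^ k)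
        = ∑ k ∈ Finset.range p, Bz k * x^k := by
      apply Finset.sum_congr rfl
      intro k _
      simp only [Bz]
    rw [this, sq, Finset.sum_mul_sum, ← Finset.sum_product',
      Finset.sum_filter_add_sum_filter_not]
  have dL : (p:ℤ)^2 ∣ ∑ q ∈ (range p ×ˢ range p).filter (fun q => ¬ q.1 + q.2 < p), FL q.1 q.2 := by
    apply Finset.dvd_sum
    intro q hq
    simp only [mem_filter, mem_product, mem_range] at hq
    by_cases hqm : q.2 ≤ q.1
    · exact Dvd.dvd.mul_right (c_dvd hp hq.1.1 hqm (by omega)) _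
    · simp only [hFL, Nat.choose_eq_zero_of_lt (show q.1 < q.2 by omega)]
      push_cast
      simp
  have dR : (p:ℤ)^2 ∣ ∑ q ∈ (range p ×ˢ range p).filter (fun q => ¬ q.1 + q.2 < p), FR q.1 q.2 := by
    apply Finset.dvd_sum
    intro q hq
    simp only [mem_filter, mem_product, mem_range] at hq
    have hb := b_dvd hp hq.1.1 hq.1.2 (by omega)
    have : FR q.1 q.2 = (Bz q.1 * Bz q.2) * (x^q.1 * x^q.2) := by
      simp only [hFR]
      ring
    rw [this]
    exact Dvd.dvd.mul_right hb _
  have goodEq : ∑ q ∈ (range p ×ˢ range p).filter (fun q => q.1 + q.2 < p), FL q.1 q.2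
      = ∑ q ∈ (range p ×ˢ range p).filter (fun q => q.1 + q.2 < p), FR q.1 q.2 := by
    rw [← tri p FL, ← tri p FR]
    apply Finset.sum_congr rfl
    intro n _
    have e1 : ∑ k ∈ range (n+1), FL k (n-k) = Lz n * x^n := by
      rw [Lz, Finset.sum_mul]
      apply Finset.sum_congr rfl
      intro k hk
      have hkn : k ≤ n := by simp only [mem_range] at hk; omega
      simp only [hFL, show k+(n-k) = n by omega]
      ring
    have e2 : ∑ k ∈ range (n+1), FR k (n-k) = Rz n * x^n := by
      rw [Rz, Finset.sum_mul]
      apply Finset.sum_congr rfl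
      intro k hk
      have hkn : k ≤ n := by simp only [mem_range] at hk; omega
      have hx : x^k * x^(n-k) = x^n := by
        rw [← pow_add, show k+(n-k) = n by omega]
      simp only [hFR]
      rw [show (Bz k * x^k)*(Bz (n-k)*x^(n-k)) = Bz k * Bz (n-k) * (x^k * x^(n-k)) by ring, hx]
    rw [e1, e2, LzRz]
  rw [Int.modEq_iff_dvd]
  have hdiff : (∑ k ∈ Finset.range p,
        (Nat.choose (2 * k) k : ℤ) * Nat.choose (4 * k) (2 * k) * x ^ k) ^ 2
      - (∑ k ∈ Finset.range p,
        (Nat.choose (2 * k) k : ℤ) ^ 2 * Nat.choose (4 * k) (2 * k) * (x * (1 - 64 * x)) ^ k)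
      = (∑ q ∈ (range p ×ˢ range p).filter (fun q => ¬ q.1 + q.2 < p), FR q.1 q.2)
        - (∑ q ∈ (range p ×ˢ range p).filter (fun q => ¬ q.1 + q.2 < p), FL q.1 q.2) := by
    rw [eA, eB, goodEq]
    ring
  rw [hdiff]
  exact dvd_sub dR dL

end S4main

theorem stmt_4 (p : ℕ) (hp : p.Prime) (hodd : Odd p) (x : ℤ) :
    (∑ k ∈ Finset.range p,
      (Nat.choose (2 * k) k : ℤ) ^ 2 * Nat.choose (4 * k) (2 * k) * (x * (1 - 64 * x)) ^ k)
    ≡ (∑ k ∈ Finset.range p,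
      (Nat.choose (2 * k) k : ℤ) * Nat.choose (4 * k) (2 * k) * x ^ k) ^ 2 [ZMOD (p : ℤ) ^ 2] :=
  S4main.aux p hp hodd x
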